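/- arXiv:1501.04783 — 2 statements merged into one kernel-verified Lean document; each statement's English description precedes it below -/
import Mathlib

section
/- Let (u,v,w) be a G₂-frame in ℝ⁷ (orthonormal with φ₀(u,v,w)=0) and R = χ(u,v,w). Then the 4-dimensional subspace 𝕍 = span{u, v, w, R} is coassociative: φ₀(x,y,z) = 0 for all x, y, z ∈ 𝕍. -/
open scoped RealInnerProductSpace

noncomputable section

/-- ℝ⁷ with its Euclidean inner product. -/
abbrev V7 := EuclideanSpace ℝ (Fin 7)

/-- The standard G₂ 3-form φ₀ = e¹²³+e¹⁴⁵+e¹⁶⁷+e²⁴⁶−e²⁵⁷−e³⁴⁷−e³⁵⁶ on ℝ⁷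
(indices shifted to 0-based), written as a trilinear alternating function. -/
def phi0 : (Fin 3 → V7) → ℝ := fun v =>
  let m : Fin 7 → Fin 7 → Fin 7 → ℝ := fun i j k =>
    Matrix.det !![v 0 i, v 0 j, v 0 k; v 1 i, v 1 j, v 1 k; v 2 i, v 2 j, v 2 k]
  m 0 1 2 + m 0 3 4 + m 0 5 6 + m 1 3 5 - m 1 4 6 - m 2 3 6 - m 2 4 5

/-- The 4-form ∗φ₀ = e⁴⁵⁶⁷+e²³⁶⁷+e²³⁴⁵+e¹³⁵⁷−e¹³⁴⁶−e¹²⁵⁶−e¹²⁴⁷ (0-based indices). -/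
def starPhi0 : (Fin 4 → V7) → ℝ := fun v =>
  let m : Fin 7 → Fin 7 → Fin 7 → Fin 7 → ℝ := fun i j k l =>
    Matrix.det !![v 0 i, v 0 j, v 0 k, v 0 l; v 1 i, v 1 j, v 1 k, v 1 l;
                  v 2 i, v 2 j, v 2 k, v 2 l; v 3 i, v 3 j, v 3 k, v 3 l]
  m 3 4 5 6 + m 1 2 5 6 + m 1 2 3 4 + m 0 2 4 6 - m 0 2 3 5 - m 0 1 4 5 - m 0 1 3 6

/-- The cross product on ℝ⁷: the unique vector with ⟨u×v, z⟩ = φ₀(u,v,z) for all z. -/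
def cross (u v : V7) : V7 := WithLp.toLp 2 (fun i => phi0 ![u, v, EuclideanSpace.single i 1])

/-- The triple cross product χ: the unique vector with ⟨χ(u,v,w), z⟩ = ∗φ₀(u,v,w,z). -/
def chi (u v w : V7) : V7 := WithLp.toLp 2 (fun i => starPhi0 ![u, v, w, EuclideanSpace.single i 1])

/-- Interior product ξ⌟α : contraction of a (k+1)-form with ξ in its first slot. -/
def iprod {k : ℕ} (ξ : V7) (α : (Fin (k + 1) → V7) → ℝ) : (Fin k → V7) → ℝ :=
  fun v => α (Fin.cons ξ v)

/-- Wedge product of alternating forms (determinant convention). -/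
def wedge {p q : ℕ} (α : (Fin p → V7) → ℝ) (β : (Fin q → V7) → ℝ) :
    (Fin (p + q) → V7) → ℝ := fun v =>
  (1 / ((p.factorial : ℝ) * q.factorial)) *
    ∑ σ : Equiv.Perm (Fin (p + q)), ((Equiv.Perm.sign σ : ℤ) : ℝ) *
      α (fun i => v (σ (Fin.castAdd q i))) * β (fun j => v (σ (Fin.natAdd p j)))

/-- The dual covector ξ^# = ⟨ξ,·⟩, as a 1-form. -/
def dualCov (ξ : V7) : (Fin 1 → V7) → ℝ := fun v => ⟪ξ, v 0⟫

/-- The standard volume form e¹∧⋯∧e⁷ on ℝ⁷. -/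
def vol7 : (Fin 7 → V7) → ℝ := fun v => Matrix.det (Matrix.of fun i j => v i j)


private lemma det4 (a b c d e f g h i j k l m n o p : ℝ) :
    Matrix.det !![a,b,c,d; e,f,g,h; i,j,k,l; m,n,o,p] =
      a*f*k*p - a*f*l*o - a*g*j*p + a*g*l*n + a*h*j*o - a*h*k*n
      - b*e*k*p + b*e*l*o + b*g*i*p - b*g*l*m - b*h*i*o + b*h*k*m
      + c*e*j*p - c*e*l*n - c*f*i*p + c*f*l*m + c*h*i*n - c*h*j*m
      - d*e*j*o + d*e*k*n + d*f*i*o - d*f*k*m - d*g*i*n + d*g*j*m := by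
  rw [Matrix.det_succ_row_zero]
  simp [Fin.sum_univ_succ, Matrix.det_fin_three, show (2:Fin 4).succAbove 2 = 3 from rfl,
    show Fin.castSucc (2:Fin 3) = (2:Fin 4) from rfl, show (1:Fin 4).succAbove 2 = 3 from rfl,
    show (3:Fin 4).succAbove 2 = 2 from rfl]
  ring

private lemma phi0_expand (x y z : V7) : phi0 ![x, y, z] =
    x 0*y 1*z 2 - x 0*y 2*z 1 + x 0*y 3*z 4 - x 0*y 4*z 3 + x 0*y 5*z 6 - x 0*y 6*z 5 - x 1*y 0*z 2 + x 1*y 2*z 0 + x 1*y 3*z 5 - x 1*y 4*z 6 - x 1*y 5*z 3 + x 1*y 6*z 4 + x 2*y 0*z 1 - x 2*y 1*z 0 - x 2*y 3*z 6 - x 2*y 4*z 5 + x 2*y 5*z 4 + x 2*y 6*z 3 - x 3*y 0*z 4 - x 3*y 1*z 5 + x 3*y 2*z 6 + x 3*y 4*z 0 + x 3*y 5*z 1 - x 3*y 6*z 2 + x 4*y 0*z 3 + x 4*y 1*z 6 + x 4*y 2*z 5 - x 4*y 3*z 0 - x 4*y 5*z 2 - x 4*y 6*z 1 - x 5*y 0*z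 6 + x 5*y 1*z 3 - x 5*y 2*z 4 - x 5*y 3*z 1 + x 5*y 4*z 2 + x 5*y 6*z 0 + x 6*y 0*z 5 - x 6*y 1*z 4 - x 6*y 2*z 3 + x 6*y 3*z 2 + x 6*y 4*z 1 - x 6*y 5*z 0 := by
  simp [phi0, Matrix.det_fin_three]
  ring

private lemma chi_apply_0 (u v w : V7) : chi u v w 0 =
    u 1*v 3*w 6 + u 1*v 4*w 5 - u 1*v 5*w 4 - u 1*v 6*w 3 + u 2*v 3*w 5 - u 2*v 4*w 6 - u 2*v 5*w 3 + u 2*v 6*w 4 - u 3*v 1*w 6 - u 3*v 2*w 5 + u 3*v 5*w 2 + u 3*v 6*w 1 - u 4*v 1*w 5 + u 4*v 2*w 6 + u 4*v 5*w 1 - u 4*v 6*w 2 + u 5*v 1*w 4 + u 5*v 2*w 3 - u 5*v 3*w 2 - u 5*v 4*w 1 + u 6*v 1*w 3 - u 6*v 2*w 4 - u 6*v 3*w 1 + u 6*v 4*w 2 := by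
  show starPhi0 ![u, v, w, EuclideanSpace.single 0 1] = _
  simp [starPhi0, det4, EuclideanSpace.single_apply]
  ring

private lemma chi_apply_1 (u v w : V7) : chi u v w 1 =
    - u 0*v 3*w 6 - u 0*v 4*w 5 + u 0*v 5*w 4 + u 0*v 6*w 3 - u 2*v 3*w 4 + u 2*v 4*w 3 - u 2*v 5*w 6 + u 2*v 6*w 5 + u 3*v 0*w 6 + u 3*v 2*w 4 - u 3*v 4*w 2 - u 3*v 6*w 0 + u 4*v 0*w 5 - u 4*v 2*w 3 + u 4*v 3*w 2 - u 4*v 5*w 0 - u 5*v 0*w 4 + u 5*v 2*w 6 + u 5*v 4*w 0 - u 5*v 6*w 2 - u 6*v 0*w 3 - u 6*v 2*w 5 + u 6*v 3*w 0 + u 6*v 5*w 2 := by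
  show starPhi0 ![u, v, w, EuclideanSpace.single 1 1] = _
  simp [starPhi0, det4, EuclideanSpace.single_apply]
  ring

private lemma chi_apply_2 (u v w : V7) : chi u v w 2 =
    - u 0*v 3*w 5 + u 0*v 4*w 6 + u 0*v 5*w 3 - u 0*v 6*w 4 + u 1*v 3*w 4 - u 1*v 4*w 3 + u 1*v 5*w 6 - u 1*v 6*w 5 + u 3*v 0*w 5 - u 3*v 1*w 4 + u 3*v 4*w 1 - u 3*v 5*w 0 - u 4*v 0*w 6 + u 4*v 1*w 3 - u 4*v 3*w 1 + u 4*v 6*w 0 - u 5*v 0*w 3 - u 5*v 1*w 6 + u 5*v 3*w 0 + u 5*v 6*w 1 + u 6*v 0*w 4 + u 6*v 1*w 5 - u 6*v 4*w 0 - u 6*v 5*w 1 := by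
  show starPhi0 ![u, v, w, EuclideanSpace.single 2 1] = _
  simp [starPhi0, det4, EuclideanSpace.single_apply]
  ring

private lemma chi_apply_3 (u v w : V7) : chi u v w 3 =
    u 0*v 1*w 6 + u 0*v 2*w 5 - u 0*v 5*w 2 - u 0*v 6*w 1 - u 1*v 0*w 6 - u 1*v 2*w 4 + u 1*v 4*w 2 + u 1*v 6*w 0 - u 2*v 0*w 5 + u 2*v 1*w 4 - u 2*v 4*w 1 + u 2*v 5*w 0 - u 4*v 1*w 2 + u 4*v 2*w 1 - u 4*v 5*w 6 + u 4*v 6*w 5 + u 5*v 0*w 2 - u 5*v 2*w 0 + u 5*v 4*w 6 - u 5*v 6*w 4 + u 6*v 0*w 1 - u 6*v 1*w 0 - u 6*v 4*w 5 + u 6*v 5*w 4 := by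
  show starPhi0 ![u, v, w, EuclideanSpace.single 3 1] = _
  simp [starPhi0, det4, EuclideanSpace.single_apply]
  ring

private lemma chi_apply_4 (u v w : V7) : chi u v w 4 =
    u 0*v 1*w 5 - u 0*v 2*w 6 - u 0*v 5*w 1 + u 0*v 6*w 2 - u 1*v 0*w 5 + u 1*v 2*w 3 - u 1*v 3*w 2 + u 1*v 5*w 0 + u 2*v 0*w 6 - u 2*v 1*w 3 + u 2*v 3*w 1 - u 2*v 6*w 0 + u 3*v 1*w 2 - u 3*v 2*w 1 + u 3*v 5*w 6 - u 3*v 6*w 5 + u 5*v 0*w 1 - u 5*v 1*w 0 - u 5*v 3*w 6 + u 5*v 6*w 3 - u 6*v 0*w 2 + u 6*v 2*w 0 + u 6*v 3*w 5 - u 6*v 5*w 3 := by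
  show starPhi0 ![u, v, w, EuclideanSpace.single 4 1] = _
  simp [starPhi0, det4, EuclideanSpace.single_apply]
  ring

private lemma chi_apply_5 (u v w : V7) : chi u v w 5 =
    - u 0*v 1*w 4 - u 0*v 2*w 3 + u 0*v 3*w 2 + u 0*v 4*w 1 + u 1*v 0*w 4 - u 1*v 2*w 6 - u 1*v 4*w 0 + u 1*v 6*w 2 + u 2*v 0*w 3 + u 2*v 1*w 6 - u 2*v 3*w 0 - u 2*v 6*w 1 - u 3*v 0*w 2 + u 3*v 2*w 0 - u 3*v 4*w 6 + u 3*v 6*w 4 - u 4*v 0*w 1 + u 4*v 1*w 0 + u 4*v 3*w 6 - u 4*v 6*w 3 - u 6*v 1*w 2 + u 6*v 2*w 1 - u 6*v 3*w 4 + u 6*v 4*w 3 := by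
  show starPhi0 ![u, v, w, EuclideanSpace.single 5 1] = _
  simp [starPhi0, det4, EuclideanSpace.single_apply]
  ring

private lemma chi_apply_6 (u v w : V7) : chi u v w 6 =
    - u 0*v 1*w 3 + u 0*v 2*w 4 + u 0*v 3*w 1 - u 0*v 4*w 2 + u 1*v 0*w 3 + u 1*v 2*w 5 - u 1*v 3*w 0 - u 1*v 5*w 2 - u 2*v 0*w 4 - u 2*v 1*w 5 + u 2*v 4*w 0 + u 2*v 5*w 1 - u 3*v 0*w 1 + u 3*v 1*w 0 + u 3*v 4*w 5 - u 3*v 5*w 4 + u 4*v 0*w 2 - u 4*v 2*w 0 - u 4*v 3*w 5 + u 4*v 5*w 3 + u 5*v 1*w 2 - u 5*v 2*w 1 + u 5*v 3*w 4 - u 5*v 4*w 3 := by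
  show starPhi0 ![u, v, w, EuclideanSpace.single 6 1] = _
  simp [starPhi0, det4, EuclideanSpace.single_apply]
  ring

private lemma phi0_uvchi (u v w : V7) : phi0 ![u, v, chi u v w] = 0 := by
  simp only [phi0_expand, chi_apply_0, chi_apply_1, chi_apply_2, chi_apply_3, chi_apply_4,
    chi_apply_5, chi_apply_6]
  ring

private lemma phi0_uwchi (u v w : V7) : phi0 ![u, w, chi u v w] = 0 := by
  simp only [phi0_expand, chi_apply_0, chi_apply_1, chi_apply_2, chi_apply_3, chi_apply_4,
    chi_apply_5, chi_apply_6]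
  ring

private lemma phi0_vwchi (u v w : V7) : phi0 ![v, w, chi u v w] = 0 := by
  simp only [phi0_expand, chi_apply_0, chi_apply_1, chi_apply_2, chi_apply_3, chi_apply_4,
    chi_apply_5, chi_apply_6]
  ring

/-- for a G₂-frame (u,v,w) and R = χ(u,v,w), the 4-plane
𝕍 = span{u,v,w,R} is coassociative: φ₀ vanishes on it. -/
theorem coassociative_V (u v w : V7) (h : Orthonormal ℝ ![u, v, w])
    (hφ : phi0 ![u, v, w] = 0) :
    ∀ x ∈ Submodule.span ℝ ({u, v, w, chi u v w} : Set V7),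
    ∀ y ∈ Submodule.span ℝ ({u, v, w, chi u v w} : Set V7),
    ∀ z ∈ Submodule.span ℝ ({u, v, w, chi u v w} : Set V7),
      phi0 ![x, y, z] = 0 := by
  intro x hx y hy z hz
  have base : ∀ a ∈ ({u, v, w, chi u v w} : Set V7), ∀ b ∈ ({u, v, w, chi u v w} : Set V7),
      ∀ c ∈ ({u, v, w, chi u v w} : Set V7), phi0 ![a, b, c] = 0 := by
    have perm : ∀ a b c : V7, phi0 ![a, b, c] = 0 →
        phi0 ![a, c, b] = 0 ∧ phi0 ![b, a, c] = 0 ∧ phi0 ![b, c, a] = 0 ∧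
        phi0 ![c, a, b] = 0 ∧ phi0 ![c, b, a] = 0 := by
      intro a b c hh
      simp only [phi0_expand] at hh ⊢
      refine ⟨by linarith, by linarith, by linarith, by linarith, by linarith⟩
    have P1 := hφ
    have P2 := phi0_uvchi u v w
    have P3 := phi0_uwchi u v w
    have P4 := phi0_vwchi u v w
    obtain ⟨Q1a, Q1b, Q1c, Q1d, Q1e⟩ := perm _ _ _ P1
    obtain ⟨Q2a, Q2b, Q2c, Q2d, Q2e⟩ := perm _ _ _ P2
    obtain ⟨Q3a, Q3b, Q3c, Q3d, Q3e⟩ := perm _ _ _ P3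
    obtain ⟨Q4a, Q4b, Q4c, Q4d, Q4e⟩ := perm _ _ _ P4
    have rep1 : ∀ a b : V7, phi0 ![a, a, b] = 0 := by
      intro a b; simp only [phi0_expand]; ring
    have rep2 : ∀ a b : V7, phi0 ![a, b, a] = 0 := by
      intro a b; simp only [phi0_expand]; ring
    have rep3 : ∀ a b : V7, phi0 ![a, b, b] = 0 := by
      intro a b; simp only [phi0_expand]; ring
    intro a ha b hb c hc
    simp only [Set.mem_insert_iff, Set.mem_singleton_iff] at ha hb hc
    rcases ha with rfl | rfl | rfl | rfl
    · rcases hb with rfl | rfl | rfl | rfl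
      · rcases hc with rfl | rfl | rfl | rfl
        · exact rep1 _ _
        · exact rep1 _ _
        · exact rep1 _ _
        · exact rep1 _ _
      · rcases hc with rfl | rfl | rfl | rfl
        · exact rep2 _ _
        · exact rep3 _ _
        · exact P1
        · exact P2
      · rcases hc with rfl | rfl | rfl | rfl
        · exact rep2 _ _
        · exact Q1a
        · exact rep3 _ _
        · exact P3
      · rcases hc with rfl | rfl | rfl | rfl
        · exact rep2 _ _
        · exact Q2a
        · exact Q3a
        · exact rep3 _ _
    · rcases hb with rfl | rfl | rfl | rfl
      · rcases hc with rfl | rfl | rfl | rfl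
        · exact rep3 _ _
        · exact rep2 _ _
        · exact Q1b
        · exact Q2b
      · rcases hc with rfl | rfl | rfl | rfl
        · exact rep1 _ _
        · exact rep1 _ _
        · exact rep1 _ _
        · exact rep1 _ _
      · rcases hc with rfl | rfl | rfl | rfl
        · exact Q1c
        · exact rep2 _ _
        · exact rep3 _ _
        · exact P4
      · rcases hc with rfl | rfl | rfl | rfl
        · exact Q2c
        · exact rep2 _ _
        · exact Q4a
        · exact rep3 _ _
    · rcases hb with rfl | rfl | rfl | rfl
      · rcases hc with rfl | rfl | rfl | rfl
        · exact rep3 _ _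
        · exact Q1d
        · exact rep2 _ _
        · exact Q3b
      · rcases hc with rfl | rfl | rfl | rfl
        · exact Q1e
        · exact rep3 _ _
        · exact rep2 _ _
        · exact Q4b
      · rcases hc with rfl | rfl | rfl | rfl
        · exact rep1 _ _
        · exact rep1 _ _
        · exact rep1 _ _
        · exact rep1 _ _
      · rcases hc with rfl | rfl | rfl | rfl
        · exact Q3c
        · exact Q4c
        · exact rep2 _ _
        · exact rep3 _ _
    · rcases hb with rfl | rfl | rfl | rfl
      · rcases hc with rfl | rfl | rfl | rfl
        · exact rep3 _ _
        · exact Q2d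
        · exact Q3d
        · exact rep2 _ _
      · rcases hc with rfl | rfl | rfl | rfl
        · exact Q2e
        · exact rep3 _ _
        · exact Q4d
        · exact rep2 _ _
      · rcases hc with rfl | rfl | rfl | rfl
        · exact Q3e
        · exact Q4e
        · exact rep3 _ _
        · exact rep2 _ _
      · rcases hc with rfl | rfl | rfl | rfl
        · exact rep1 _ _
        · exact rep1 _ _
        · exact rep1 _ _
        · exact rep1 _ _
  have lin3 : ∀ x y : V7, (∀ c ∈ ({u, v, w, chi u v w} : Set V7), phi0 ![x, y, c] = 0) →
      ∀ z ∈ Submodule.span ℝ ({u, v, w, chi u v w} : Set V7), phi0 ![x, y, z] = 0 := by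
    intro x y hc z hz
    induction hz using Submodule.span_induction with
    | mem c hcS => exact hc c hcS
    | zero => simp [phi0_expand]
    | add a b _ _ ha hb =>
      simp only [phi0_expand] at ha hb
      simp only [phi0_expand, PiLp.add_apply]
      linear_combination ha + hb
    | smul r a _ ha =>
      simp only [phi0_expand] at ha
      simp only [phi0_expand, PiLp.smul_apply, smul_eq_mul]
      linear_combination r * ha
  have lin2 : ∀ x : V7, (∀ b ∈ ({u, v, w, chi u v w} : Set V7),
      ∀ c ∈ ({u, v, w, chi u v w} : Set V7), phi0 ![x, b, c] = 0) →
      ∀ y ∈ Submodule.span ℝ ({u, v, w, chi u v w} : Set V7),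
      ∀ z ∈ Submodule.span ℝ ({u, v, w, chi u v w} : Set V7), phi0 ![x, y, z] = 0 := by
    intro x hb y hy
    induction hy using Submodule.span_induction with
    | mem b hbS => exact lin3 x b (hb b hbS)
    | zero =>
      intro z hz
      have h0 : ∀ c ∈ ({u, v, w, chi u v w} : Set V7), phi0 ![x, 0, c] = 0 := by
        intro c _; simp [phi0_expand]
      exact lin3 x 0 h0 z hz
    | add a b _ _ ha hb' =>
      intro z hz
      have h1 := ha z hz
      have h2 := hb' z hz
      simp only [phi0_expand] at h1 h2
      simp only [phi0_expand, PiLp.add_apply]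
      linear_combination h1 + h2
    | smul r a _ ha =>
      intro z hz
      have h1 := ha z hz
      simp only [phi0_expand] at h1
      simp only [phi0_expand, PiLp.smul_apply, smul_eq_mul]
      linear_combination r * h1
  refine Submodule.span_induction ?_ ?_ ?_ ?_ hx
  · intro a ha
    exact lin2 a (base a ha) y hy z hz
  · have h0 : ∀ b ∈ ({u, v, w, chi u v w} : Set V7), ∀ c ∈ ({u, v, w, chi u v w} : Set V7),
        phi0 ![(0 : V7), b, c] = 0 := by intro b _ c _; simp [phi0_expand]
    exact lin2 0 h0 y hy z hz
  · intro a b _ _ ha hb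
    simp only [phi0_expand] at ha hb
    simp only [phi0_expand, PiLp.add_apply]
    linear_combination ha + hb
  · intro r a _ ha
    simp only [phi0_expand] at ha
    simp only [phi0_expand, PiLp.smul_apply, smul_eq_mul]
    linear_combination r * ha

end
end

section
/- Let (u,v,w) be a G₂-frame in ℝ⁷ (orthonormal with φ₀(u,v,w)=0), R = χ(u,v,w), R′ = (u×v+v×w+w×u)/√3, R″ = (u+v+w)/√3. Then for all real a, b, c with a+b+c = 0: √3 R′×(au+bv+cw) = (c−b)u + (a−c)v + (b−a)w, and √3 R′×(a(v×w)+b(w×u)+c(u×v)) = (b−c)(v×w) + (c−a)(w×u) + (a−b)(u×v); moreover R′×R″ = R. -/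
open scoped RealInnerProductSpace

noncomputable section

/- ### Auxiliary lemmas -/

lemma det4_aux (a b c d e f g h i j k l m n o p : ℝ) :
    Matrix.det !![a,b,c,d;e,f,g,h;i,j,k,l;m,n,o,p] =
      a*(f*(k*p-l*o) - g*(j*p-l*n) + h*(j*o-k*n))
    - b*(e*(k*p-l*o) - g*(i*p-l*m) + h*(i*o-k*m))
    + c*(e*(j*p-l*n) - f*(i*p-l*m) + h*(i*n-j*m))
    - d*(e*(j*o-k*n) - f*(i*o-k*m) + g*(i*n-j*m)) := by
  rw [Matrix.det_succ_row_zero]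
  simp [Fin.sum_univ_succ, Matrix.det_fin_three, Matrix.submatrix_apply, Fin.succAbove]
  ring

lemma cross_skew (x y : V7) : cross x y = - cross y x := by
  ext i
  show cross x y i = - cross y x i
  simp [cross, phi0, Matrix.det_fin_three]
  ring

lemma cross_self7 (x : V7) : cross x x = 0 := by
  ext i
  show cross x x i = (0 : ℝ)
  simp [cross, phi0, Matrix.det_fin_three]
  ring

set_option maxHeartbeats 1000000 in
lemma cross_add_left (x y z : V7) : cross (x + y) z = cross x z + cross y z := by
  ext i
  show cross (x + y) z i = cross x z i + cross y z i
  fin_cases i <;>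
    · simp [cross, phi0, Matrix.det_fin_three, PiLp.add_apply, EuclideanSpace.single_apply]
      ring

set_option maxHeartbeats 1000000 in
lemma cross_add_right (x y z : V7) : cross x (y + z) = cross x y + cross x z := by
  ext i
  show cross x (y + z) i = cross x y i + cross x z i
  fin_cases i <;>
    · simp [cross, phi0, Matrix.det_fin_three, PiLp.add_apply, EuclideanSpace.single_apply]
      ring

set_option maxHeartbeats 1000000 in
lemma cross_smul_left (a : ℝ) (x y : V7) : cross (a • x) y = a • cross x y := by
  ext i
  show cross (a • x) y i = a * cross x y i
  fin_cases i <;>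
    · simp [cross, phi0, Matrix.det_fin_three, PiLp.smul_apply, smul_eq_mul,
        EuclideanSpace.single_apply]
      ring

set_option maxHeartbeats 1000000 in
lemma cross_smul_right (a : ℝ) (x y : V7) : cross x (a • y) = a • cross x y := by
  ext i
  show cross x (a • y) i = a * cross x y i
  fin_cases i <;>
    · simp [cross, phi0, Matrix.det_fin_three, PiLp.smul_apply, smul_eq_mul,
        EuclideanSpace.single_apply]
      ring

set_option maxHeartbeats 1000000 in
lemma cross_neg_right (x y : V7) : cross x (-y) = - cross x y := by
  ext i
  show cross x (-y) i = - cross x y i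
  fin_cases i <;>
    · simp [cross, phi0, Matrix.det_fin_three, PiLp.neg_apply, EuclideanSpace.single_apply]
      ring

lemma inner_cross (x y z : V7) : ⟪z, cross x y⟫ = phi0 ![x, y, z] := by
  simp [PiLp.inner_apply, RCLike.inner_apply, starRingEnd_apply, Fin.sum_univ_seven,
    cross, phi0, Matrix.det_fin_three]
  ring

lemma phi0_cyc (x y z : V7) : phi0 ![z, x, y] = phi0 ![x, y, z] := by
  simp [phi0, Matrix.det_fin_three]
  ring

lemma inner_cross_left (x y : V7) : ⟪x, cross x y⟫ = 0 := by
  rw [inner_cross]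
  simp [phi0, Matrix.det_fin_three]
  ring

lemma inner_cross_right (x y : V7) : ⟪y, cross x y⟫ = 0 := by
  rw [inner_cross]
  simp [phi0, Matrix.det_fin_three, Matrix.vecHead, Matrix.vecTail]
  ring

set_option maxHeartbeats 1000000 in
lemma chi_cyc (x y z : V7) : chi z x y = chi x y z := by
  ext i
  show chi z x y i = chi x y z i
  simp only [chi, starPhi0, det4_aux, Matrix.cons_val', Matrix.cons_val_zero,
    Matrix.cons_val_one, Matrix.head_cons, Matrix.head_fin_const, Matrix.empty_val',
    Matrix.cons_val_fin_one, Matrix.cons_val_two, Matrix.cons_val_three, Matrix.tail_cons]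
  ring

set_option maxHeartbeats 1000000 in
lemma chi_self (x y : V7) : chi x x y = 0 := by
  ext i
  show chi x x y i = (0 : ℝ)
  simp only [chi, starPhi0, det4_aux, Matrix.cons_val', Matrix.cons_val_zero,
    Matrix.cons_val_one, Matrix.head_cons, Matrix.head_fin_const, Matrix.empty_val',
    Matrix.cons_val_fin_one, Matrix.cons_val_two, Matrix.cons_val_three, Matrix.tail_cons]
  ring

lemma chi_self2 (x y : V7) : chi x y y = 0 := by
  rw [chi_cyc y y x, chi_self]

set_option maxHeartbeats 2000000 in
lemma L1_inner (x y z t : V7) :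
    ⟪t, cross x (cross y z)⟫ = ⟪t, ⟪x,z⟫ • y - ⟪x,y⟫ • z - chi x y z⟫ := by
  simp [PiLp.inner_apply, RCLike.inner_apply, starRingEnd_apply, Fin.sum_univ_seven,
    cross, chi, phi0, starPhi0, Matrix.det_fin_three, det4_aux, PiLp.sub_apply,
    PiLp.smul_apply, smul_eq_mul]
  ring

lemma L1v (x y z : V7) :
    cross x (cross y z) = ⟪x,z⟫ • y - ⟪x,y⟫ • z - chi x y z := by
  ext i
  have h := L1_inner x y z (EuclideanSpace.single i 1)
  simpa [EuclideanSpace.inner_single_left] using h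

lemma L1' (x y z : V7) :
    cross (cross x y) z =
      (2 * ⟪x,z⟫) • y - ⟪y,z⟫ • x - ⟪x,y⟫ • z - cross x (cross y z) := by
  have hx := L1v x y z
  rw [cross_skew (cross x y) z, L1v z x y, chi_cyc x y z, hx,
    real_inner_comm z y, real_inner_comm z x]
  module

/-- for a G₂-frame (u,v,w) and a+b+c=0:
√3 R′×(au+bv+cw) = (c−b)u+(a−c)v+(b−a)w,
√3 R′×(a(v×w)+b(w×u)+c(u×v)) = (b−c)(v×w)+(c−a)(w×u)+(a−b)(u×v),
and R′×R″ = R. -/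
theorem J_R_prime (u v w : V7) (h : Orthonormal ℝ ![u, v, w])
    (hφ : phi0 ![u, v, w] = 0) (R R' R'' : V7) (hR : R = chi u v w)
    (hR' : R' = (Real.sqrt 3)⁻¹ • (cross u v + cross v w + cross w u))
    (hR'' : R'' = (Real.sqrt 3)⁻¹ • (u + v + w)) :
    (∀ a b c : ℝ, a + b + c = 0 →
      Real.sqrt 3 • cross R' (a • u + b • v + c • w) =
        (c - b) • u + (a - c) • v + (b - a) • w ∧
      Real.sqrt 3 • cross R' (a • cross v w + b • cross w u + c • cross u v) =
        (b - c) • cross v w + (c - a) • cross w u + (a - b) • cross u v) ∧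
    cross R' R'' = R := by
  have hs3 : Real.sqrt 3 ≠ 0 := by positivity
  have hon := orthonormal_iff_ite.mp h
  have huu : ⟪u,u⟫ = 1 := by simpa using hon 0 0
  have hvv : ⟪v,v⟫ = 1 := by simpa using hon 1 1
  have hww : ⟪w,w⟫ = 1 := by simpa using hon 2 2
  have huv : ⟪u,v⟫ = 0 := by simpa using hon 0 1
  have huw : ⟪u,w⟫ = 0 := by simpa using hon 0 2
  have hvw : ⟪v,w⟫ = 0 := by simpa using hon 1 2
  have hvu : ⟪v,u⟫ = 0 := by rw [real_inner_comm]; exact huv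
  have hwu : ⟪w,u⟫ = 0 := by rw [real_inner_comm]; exact huw
  have hwv : ⟪w,v⟫ = 0 := by rw [real_inner_comm]; exact hvw
  have hf1 : ⟪u, cross v w⟫ = 0 := by rw [inner_cross, ← phi0_cyc v w u]; exact hφ
  have hf2 : ⟪v, cross w u⟫ = 0 := by
    rw [inner_cross, ← phi0_cyc w u v, ← phi0_cyc v w u]; exact hφ
  have hf3 : ⟪w, cross u v⟫ = 0 := by rw [inner_cross]; exact hφ
  -- basic double cross product evaluations
  have c1 : chi u w u = 0 := by rw [chi_cyc w u u, chi_self2]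
  have c2 : chi v w u = chi u v w := by rw [chi_cyc w u v, chi_cyc u v w]
  have c3 : chi v u v = 0 := by rw [chi_cyc u v v, chi_self2]
  have c5 : chi w v w = 0 := by rw [chi_cyc v w w, chi_self2]
  have euuv : cross u (cross u v) = -v := by
    rw [L1v, huv, huu, chi_self]; module
  have euvw : cross u (cross v w) = -R := by
    rw [L1v, huw, huv, ← hR]; module
  have euwu : cross u (cross w u) = w := by
    rw [L1v, huu, huw, c1]; module
  have evuv : cross v (cross u v) = u := by
    rw [L1v, hvv, hvu, c3]; module
  have evvw : cross v (cross v w) = -w := by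
    rw [L1v, hvw, hvv, chi_self]; module
  have evwu : cross v (cross w u) = -R := by
    rw [L1v, hvu, hvw, c2, ← hR]; module
  have ewuv : cross w (cross u v) = -R := by
    rw [L1v, hwv, hwu, chi_cyc u v w, ← hR]; module
  have ewvw : cross w (cross v w) = v := by
    rw [L1v, hww, hwv, c5]; module
  have ewwu : cross w (cross w u) = -u := by
    rw [L1v, hwu, hww, chi_self]; module
  -- action of A = u×v + v×w + w×u
  have hAu : cross (cross u v + cross v w + cross w u) u = v - w + R := by
    rw [cross_add_left, cross_add_left, cross_skew (cross u v) u,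
      cross_skew (cross v w) u, cross_skew (cross w u) u, euuv, euvw, euwu]
    module
  have hAv : cross (cross u v + cross v w + cross w u) v = w - u + R := by
    rw [cross_add_left, cross_add_left, cross_skew (cross u v) v,
      cross_skew (cross v w) v, cross_skew (cross w u) v, evuv, evvw, evwu]
    module
  have hAw : cross (cross u v + cross v w + cross w u) w = u - v + R := by
    rw [cross_add_left, cross_add_left, cross_skew (cross u v) w,
      cross_skew (cross v w) w, cross_skew (cross w u) w, ewuv, ewvw, ewwu]
    module
  -- products of cross products
  have ePQ : cross (cross u v) (cross v w) = cross u w := by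
    rw [L1' u v (cross v w), hf1, inner_cross_left v w, huv, evvw, cross_neg_right]
    module
  have eQS : cross (cross v w) (cross w u) = cross v u := by
    rw [L1' v w (cross w u), hf2, inner_cross_left w u, hvw, ewwu, cross_neg_right]
    module
  have eSP : cross (cross w u) (cross u v) = cross w v := by
    rw [L1' w u (cross u v), hf3, inner_cross_left u v, hwu, euuv, cross_neg_right]
    module
  have hAQ : cross (cross u v + cross v w + cross w u) (cross v w) =
      cross u w + cross u v := by
    rw [cross_add_left, cross_add_left, ePQ, cross_self7,
      cross_skew (cross w u) (cross v w), eQS, cross_skew v u]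
    module
  have hAS : cross (cross u v + cross v w + cross w u) (cross w u) =
      cross v u + cross v w := by
    rw [cross_add_left, cross_add_left, eQS, cross_self7,
      cross_skew (cross u v) (cross w u), eSP, cross_skew w v]
    module
  have hAP : cross (cross u v + cross v w + cross w u) (cross u v) =
      cross w v + cross w u := by
    rw [cross_add_left, cross_add_left, eSP, cross_self7,
      cross_skew (cross v w) (cross u v), ePQ, cross_skew u w]
    module
  refine ⟨fun a b c habc => ⟨?_, ?_⟩, ?_⟩
  · have hc : c = -a - b := by linarith
    subst hc
    rw [hR', cross_smul_left, smul_smul, mul_inv_cancel₀ hs3, one_smul,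
      cross_add_right, cross_add_right, cross_smul_right, cross_smul_right,
      cross_smul_right, hAu, hAv, hAw]
    module
  · have hc : c = -a - b := by linarith
    subst hc
    rw [hR', cross_smul_left, smul_smul, mul_inv_cancel₀ hs3, one_smul,
      cross_add_right, cross_add_right, cross_smul_right, cross_smul_right,
      cross_smul_right, hAQ, hAS, hAP, cross_skew u w, cross_skew v u, cross_skew w v]
    module
  · have h3 : Real.sqrt 3 * Real.sqrt 3 = 3 := Real.mul_self_sqrt (by norm_num)
    have hval : (Real.sqrt 3)⁻¹ * (Real.sqrt 3)⁻¹ * 3 = 1 := by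
      rw [← mul_inv, h3]
      norm_num
    rw [hR', hR'', cross_smul_left, cross_smul_right, cross_add_right,
      cross_add_right, hAu, hAv, hAw]
    have hsum : (v - w + R) + (w - u + R) + (u - v + R) = (3:ℝ) • R := by module
    rw [hsum, smul_smul, smul_smul, hval, one_smul]

end
end
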